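/- Let m ≥ 1, a_1,…,a_n ∈ ℝ^m, x ∈ ℝ_{≥0}^n, S ⊆ [n], and 0 ≤ r ≤ m. Then the coefficient of t^r in the degree-m polynomial t ↦ det(t · Σ_{i∈[n]} x_i a_i a_iᵀ + Σ_{j∈S} a_j a_jᵀ) equals Σ_{U ⊆ [n], |U| = r} Σ_{W ⊆ S, |W| = m−r} (∏_{i∈U} x_i) · det(Σ_{i∈U} a_i a_iᵀ + Σ_{j∈W} a_j a_jᵀ). -/

import Mathlib

open Matrix Finset Polynomial

section aux

variable {R : Type*} [CommRing R] {ι : Type*} [DecidableEq ι] {m : ℕ}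

lemma aux_row_expand (v : ι → Fin m → R) (c : ι → R) (T : Finset ι) :
    (∑ i ∈ T, c i • vecMulVec (v i) (v i)).det
      = ∑ f ∈ Fintype.piFinset (fun _ : Fin m => T),
          (∏ k, (c (f k) * v (f k) k)) * (Matrix.of fun k => v (f k)).det := by
  have hM : (∑ i ∈ T, c i • vecMulVec (v i) (v i))
      = Matrix.of (fun k => ∑ i ∈ T, (c i * v i k) • v i) := by
    ext k l
    simp only [Matrix.sum_apply, Matrix.smul_apply, vecMulVec_apply, Matrix.of_apply,
      Finset.sum_apply, Pi.smul_apply, smul_eq_mul]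
    exact Finset.sum_congr rfl fun i _ => by ring
  rw [hM]
  have hdet : ∀ M : Matrix (Fin m) (Fin m) R,
      M.det = (Matrix.detRowAlternating : (Fin m → R) [⋀^Fin m]→ₗ[R] R) M := fun _ => rfl
  rw [hdet]
  have := (Matrix.detRowAlternating : (Fin m → R) [⋀^Fin m]→ₗ[R] R).toMultilinearMap.map_sum_finset
      (fun k i => (c i * v i k) • v i) (fun _ : Fin m => T)
  simp only [AlternatingMap.coe_multilinearMap] at this
  rw [show ((Matrix.of (fun k => ∑ i ∈ T, (c i * v i k) • v i)) :
        Fin m → Fin m → R) = (fun k => ∑ i ∈ T, (c i * v i k) • v i) from rfl, this]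
  refine Finset.sum_congr rfl fun f _ => ?_
  have := (Matrix.detRowAlternating :
      (Fin m → R) [⋀^Fin m]→ₗ[R] R).toMultilinearMap.map_smul_univ
      (fun k => c (f k) * v (f k) k) (fun k => v (f k))
  simp only [AlternatingMap.coe_multilinearMap] at this
  rw [this, smul_eq_mul, hdet]
  rfl

lemma aux_cauchy_binet (v : ι → Fin m → R) (c : ι → R) (T : Finset ι) :
    (∑ i ∈ T, c i • vecMulVec (v i) (v i)).det
      = ∑ U ∈ T.powersetCard m, (∏ i ∈ U, c i) * (∑ i ∈ U, vecMulVec (v i) (v i)).det := by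
  classical
  rw [aux_row_expand]
  have hzero : ∀ f ∈ Fintype.piFinset (fun _ : Fin m => T),
      ((∏ k, (c (f k) * v (f k) k)) * (Matrix.of fun k => v (f k)).det) ≠ 0 →
      Function.Injective f := by
    intro f _ hne
    by_contra hinj
    obtain ⟨k1, k2, h12, hne'⟩ := Function.not_injective_iff.mp hinj
    exact hne (by rw [Matrix.det_zero_of_row_eq hne'
      (show (Matrix.of fun k => v (f k)) k1 = (Matrix.of fun k => v (f k)) k2 from
        congrArg v h12), mul_zero])
  rw [← Finset.sum_filter_of_ne hzero]
  have hmaps : ∀ f ∈ (Fintype.piFinset (fun _ : Fin m => T)).filter Function.Injective,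
      Finset.univ.image f ∈ T.powersetCard m := by
    intro f hf
    rw [Finset.mem_filter, Fintype.mem_piFinset] at hf
    rw [Finset.mem_powersetCard]
    refine ⟨fun i hi => ?_, ?_⟩
    · obtain ⟨k, _, rfl⟩ := Finset.mem_image.mp hi
      exact hf.1 k
    · rw [Finset.card_image_of_injective _ hf.2, Finset.card_univ, Fintype.card_fin]
  rw [← Finset.sum_fiberwise_of_maps_to hmaps]
  refine Finset.sum_congr rfl fun U hU => ?_
  rw [Finset.mem_powersetCard] at hU
  have hRHS : (∑ i ∈ U, vecMulVec (v i) (v i)) = ∑ i ∈ U, (1 : R) • vecMulVec (v i) (v i) := by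
    simp
  rw [hRHS, aux_row_expand]
  have hzero' : ∀ f ∈ Fintype.piFinset (fun _ : Fin m => U),
      ((∏ k, ((1 : R) * v (f k) k)) * (Matrix.of fun k => v (f k)).det) ≠ 0 →
      Function.Injective f := by
    intro f _ hne
    by_contra hinj
    obtain ⟨k1, k2, h12, hne'⟩ := Function.not_injective_iff.mp hinj
    exact hne (by rw [Matrix.det_zero_of_row_eq hne'
      (show (Matrix.of fun k => v (f k)) k1 = (Matrix.of fun k => v (f k)) k2 from
        congrArg v h12), mul_zero])
  rw [← Finset.sum_filter_of_ne hzero']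
  have hAB : ((Fintype.piFinset (fun _ : Fin m => T)).filter Function.Injective).filter
        (fun f => Finset.univ.image f = U)
      = (Fintype.piFinset (fun _ : Fin m => U)).filter Function.Injective := by
    ext f
    simp only [Finset.mem_filter, Fintype.mem_piFinset]
    constructor
    · rintro ⟨⟨hT, hinj⟩, himg⟩
      exact ⟨fun k => himg ▸ Finset.mem_image_of_mem f (Finset.mem_univ k), hinj⟩
    · rintro ⟨hUmem, hinj⟩
      refine ⟨⟨fun k => hU.1 (hUmem k), hinj⟩, ?_⟩
      refine Finset.eq_of_subset_of_card_le ?_ ?_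
      · intro i hi
        obtain ⟨k, _, rfl⟩ := Finset.mem_image.mp hi
        exact hUmem k
      · rw [Finset.card_image_of_injective _ hinj, Finset.card_univ, Fintype.card_fin, hU.2]
  rw [hAB, Finset.mul_sum]
  refine Finset.sum_congr rfl fun f hf => ?_
  rw [Finset.mem_filter, Fintype.mem_piFinset] at hf
  have himg : Finset.univ.image f = U := by
    refine Finset.eq_of_subset_of_card_le ?_ ?_
    · intro i hi
      obtain ⟨k, _, rfl⟩ := Finset.mem_image.mp hi
      exact hf.1 k
    · rw [Finset.card_image_of_injective _ hf.2, Finset.card_univ, Fintype.card_fin, hU.2]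
  have hprod : ∏ i ∈ U, c i = ∏ k, c (f k) := by
    rw [← himg, Finset.prod_image (fun a _ b _ h => hf.2 h)]
  rw [hprod, Finset.prod_mul_distrib]
  simp only [one_mul]
  ring

end aux

set_option maxHeartbeats 1000000 in
/-- Cauchy–Binet expansion of `det(t·∑_i x_i a_i a_iᵀ + ∑_{j∈S} a_j a_jᵀ)`: the
coefficient of `t^r` equals the stated sum over pairs of subsets `U ⊆ [n]`, `W ⊆ S`
with `|U| = r` and `|W| = m - r`. -/
theorem stmt15 (m n : ℕ) (hm : 1 ≤ m) (a : Fin n → Fin m → ℝ) (x : Fin n → ℝ)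
    (hx : ∀ i, 0 ≤ x i) (S : Finset (Fin n)) (r : ℕ) (hr : r ≤ m) :
    ((Polynomial.X : Polynomial ℝ)
          • (∑ i, x i • vecMulVec (a i) (a i)).map (Polynomial.C : ℝ →+* Polynomial ℝ)
        + (∑ j ∈ S, vecMulVec (a j) (a j)).map
            (Polynomial.C : ℝ →+* Polynomial ℝ)).det.coeff r
      = ∑ U ∈ Finset.univ.powersetCard r, ∑ W ∈ S.powersetCard (m - r),
          (∏ i ∈ U, x i)
            * (∑ i ∈ U, vecMulVec (a i) (a i) + ∑ j ∈ W, vecMulVec (a j) (a j)).det := by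
  classical
  set c : Fin n ⊕ Fin n → Polynomial ℝ :=
    Sum.elim (fun i => Polynomial.C (x i) * Polynomial.X) (fun _ => 1) with hc
  set w : Fin n ⊕ Fin n → Fin m → Polynomial ℝ :=
    Sum.elim (fun i k => Polynomial.C (a i k)) (fun j k => Polynomial.C (a j k)) with hw
  set T : Finset (Fin n ⊕ Fin n) := (Finset.univ : Finset (Fin n)).disjSum S with hT
  have hmat : ((Polynomial.X : Polynomial ℝ)
          • (∑ i, x i • vecMulVec (a i) (a i)).map (Polynomial.C : ℝ →+* Polynomial ℝ)
        + (∑ j ∈ S, vecMulVec (a j) (a j)).map (Polynomial.C : ℝ →+* Polynomial ℝ))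
      = ∑ i ∈ T, c i • vecMulVec (w i) (w i) := by
    rw [hT, Finset.sum_disjSum]
    ext k l
    simp only [Matrix.add_apply, Matrix.smul_apply, Matrix.map_apply, Matrix.sum_apply,
      vecMulVec_apply, hc, hw, Sum.elim_inl, Sum.elim_inr, Pi.smul_apply, smul_eq_mul,
      one_smul, map_sum, Finset.mul_sum, one_mul]
    rw [Finset.sum_congr rfl (fun i (_ : i ∈ (Finset.univ : Finset (Fin n))) =>
        show X * Polynomial.C (x i * (a i k * a i l))
          = Polynomial.C (x i) * X * (Polynomial.C (a i k) * Polynomial.C (a i l)) by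
          rw [Polynomial.C_mul, Polynomial.C_mul]; ring),
      Finset.sum_congr rfl (fun j (_ : j ∈ S) =>
        show Polynomial.C (a j k * a j l) = Polynomial.C (a j k) * Polynomial.C (a j l) by
          rw [Polynomial.C_mul])]
  rw [hmat, aux_cauchy_binet, Polynomial.finset_sum_coeff]
  have hterm : ∀ U' ∈ T.powersetCard m,
      (((∏ i ∈ U', c i) * (∑ i ∈ U', vecMulVec (w i) (w i)).det).coeff r)
      = if U'.toLeft.card = r then
          (∏ i ∈ U'.toLeft, x i)
            * (∑ i ∈ U'.toLeft, vecMulVec (a i) (a i)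
                + ∑ j ∈ U'.toRight, vecMulVec (a j) (a j)).det
        else 0 := by
    intro U' _
    have hprod : ∏ i ∈ U', c i
        = Polynomial.C (∏ i ∈ U'.toLeft, x i) * Polynomial.X ^ U'.toLeft.card := by
      conv_lhs => rw [← Finset.toLeft_disjSum_toRight (u := U')]
      rw [Finset.prod_disjSum]
      simp only [hc, Sum.elim_inl, Sum.elim_inr, Finset.prod_const_one, mul_one,
        Finset.prod_mul_distrib, Finset.prod_const, map_prod]
    have hdet : (∑ i ∈ U', vecMulVec (w i) (w i))
        = ((∑ i ∈ U'.toLeft, vecMulVec (a i) (a i)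
            + ∑ j ∈ U'.toRight, vecMulVec (a j) (a j)).map
              (Polynomial.C : ℝ →+* Polynomial ℝ)) := by
      conv_lhs => rw [← Finset.toLeft_disjSum_toRight (u := U')]
      rw [Finset.sum_disjSum]
      ext k l
      simp [hw, Matrix.sum_apply, vecMulVec_apply]
    rw [hprod, hdet,
      show ((∑ i ∈ U'.toLeft, vecMulVec (a i) (a i)
          + ∑ j ∈ U'.toRight, vecMulVec (a j) (a j)).map
            ((Polynomial.C : ℝ →+* Polynomial ℝ) : ℝ → Polynomial ℝ)).det
        = Polynomial.C ((∑ i ∈ U'.toLeft, vecMulVec (a i) (a i)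
          + ∑ j ∈ U'.toRight, vecMulVec (a j) (a j)).det) from
        ((Polynomial.C : ℝ →+* Polynomial ℝ).map_det _).symm]
    rw [show (Polynomial.C (∏ i ∈ U'.toLeft, x i) * Polynomial.X ^ U'.toLeft.card)
          * Polynomial.C ((∑ i ∈ U'.toLeft, vecMulVec (a i) (a i)
              + ∑ j ∈ U'.toRight, vecMulVec (a j) (a j)).det)
        = Polynomial.C ((∏ i ∈ U'.toLeft, x i)
            * (∑ i ∈ U'.toLeft, vecMulVec (a i) (a i)
              + ∑ j ∈ U'.toRight, vecMulVec (a j) (a j)).det)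
            * Polynomial.X ^ U'.toLeft.card by rw [Polynomial.C_mul]; ring]
    rw [Polynomial.coeff_C_mul, Polynomial.coeff_X_pow]
    by_cases h : U'.toLeft.card = r
    · simp [h]
    · rw [if_neg (fun hh : r = U'.toLeft.card => h hh.symm), mul_zero, if_neg h]
  rw [Finset.sum_congr rfl hterm, ← Finset.sum_filter]
  rw [← Finset.sum_product']
  refine Finset.sum_nbij' (fun U' => (U'.toLeft, U'.toRight))
    (fun p => p.1.disjSum p.2) ?_ ?_ ?_ ?_ ?_
  · intro U' hU'
    rw [Finset.mem_filter, Finset.mem_powersetCard] at hU'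
    obtain ⟨⟨hsub, hcard⟩, hL⟩ := hU'
    rw [Finset.mem_product, Finset.mem_powersetCard, Finset.mem_powersetCard]
    refine ⟨⟨Finset.subset_univ _, hL⟩, ?_, ?_⟩
    · intro j hj
      have := hsub (Finset.mem_toRight.mp hj)
      rwa [hT, Finset.inr_mem_disjSum] at this
    · have := Finset.card_toLeft_add_card_toRight (u := U')
      show U'.toRight.card = m - r
      omega
  · intro p hp
    rw [Finset.mem_product, Finset.mem_powersetCard, Finset.mem_powersetCard] at hp
    rw [Finset.mem_filter, Finset.mem_powersetCard]
    refine ⟨⟨?_, ?_⟩, ?_⟩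
    · intro z hz
      rw [Finset.mem_disjSum] at hz
      rcases hz with ⟨i, _, rfl⟩ | ⟨j, hj, rfl⟩
      · rw [hT, Finset.inl_mem_disjSum]; exact Finset.mem_univ i
      · rw [hT, Finset.inr_mem_disjSum]; exact hp.2.1 hj
    · rw [Finset.card_disjSum, hp.1.2, hp.2.2]; omega
    · rw [Finset.toLeft_disjSum, hp.1.2]
  · intro U' _; exact Finset.toLeft_disjSum_toRight
  · intro p _; exact Prod.ext Finset.toLeft_disjSum Finset.toRight_disjSum
  · intro U' _; rfl
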